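/- Let G be a finite group with exactly one conjugacy class of involutions, let x ∈ G be an involution, and let α = σ_x be the inner automorphism g ↦ xgx. Then the set G_{-α} = {g ∈ G | α(g) = g⁻¹} has cardinality |ω_α(G)| + 1, where ω_α(G) = {α(g)g⁻¹ | g ∈ G}. -/
import Mathlib


theorem stmt0 {G : Type*} [Group G] [Finite G] (x : G) (hx2 : x ^ 2 = 1) (hx1 : x ≠ 1)
    (huniq : ∀ a b : G, a ^ 2 = 1 → a ≠ 1 → b ^ 2 = 1 → b ≠ 1 → IsConj a b) :
    {g : G | x * g * x = g⁻¹}.ncard = {y : G | ∃ g : G, y = x * g * x * g⁻¹}.ncard + 1 := by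
  have hxx : x * x = 1 := by rw [← sq]; exact hx2
  have hxinv : x⁻¹ = x := inv_eq_of_mul_eq_one_right hxx
  have hS : {g : G | x * g * x = g⁻¹}
      = insert x {y : G | ∃ g : G, y = x * g * x * g⁻¹} := by
    ext g
    simp only [Set.mem_setOf_eq, Set.mem_insert_iff]
    constructor
    · intro h
      by_cases hg : g = x
      · exact Or.inl hg
      · right
        have h2 : (x * g) ^ 2 = 1 := by
          rw [sq]
          calc x * g * (x * g) = (x * g * x) * g := by group
            _ = g⁻¹ * g := by rw [h]
            _ = 1 := inv_mul_cancel g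
        have h1 : x * g ≠ 1 := by
          intro hc
          apply hg
          have : x * (x * g) = x * 1 := by rw [hc]
          rw [← mul_assoc, hxx, one_mul, mul_one] at this
          exact this.symm ▸ rfl
        obtain ⟨c, hc⟩ := (isConj_iff).mp (huniq x (x * g) hx2 hx1 h2 h1)
        refine ⟨c, ?_⟩
        calc g = x * (x * g) := by rw [← mul_assoc, hxx, one_mul]
          _ = x * (c * x * c⁻¹) := by rw [hc]
          _ = x * c * x * c⁻¹ := by simp [mul_assoc]
    · rintro (rfl | ⟨h, rfl⟩)
      · rw [hxx, one_mul, hxinv]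
      · rw [mul_inv_rev, mul_inv_rev, mul_inv_rev, hxinv]
        calc x * (x * h * x * h⁻¹) * x = (x * x) * h * x * h⁻¹ * x := by group
          _ = h * x * h⁻¹ * x := by rw [hxx, one_mul]
          _ = h⁻¹⁻¹ * (x * (h⁻¹ * x)) := by simp [mul_assoc]
  have hnot : x ∉ {y : G | ∃ g : G, y = x * g * x * g⁻¹} := by
    rintro ⟨g, hg⟩
    apply hx1
    have : x * x = x * (x * g * x * g⁻¹) := by rw [← hg]
    rw [hxx] at this
    have h2 : g * x * g⁻¹ = 1 := by
      calc g * x * g⁻¹ = (x * x) * g * x * g⁻¹ := by rw [hxx, one_mul]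
        _ = x * (x * g * x * g⁻¹) := by simp [mul_assoc]
        _ = 1 := this.symm
    have : x = 1 := by
      have := congrArg (fun y => g⁻¹ * y * g) h2
      simpa [mul_assoc] using this
    exact this
  rw [hS, Set.ncard_insert_of_notMem hnot (Set.toFinite _)]
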